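/- If H_{r-1} is a parity check matrix of a binary linear code of length n_{r-1} with minimum distance d_{r-1} ≥ 4, then the code with parity check matrix H_r obtained by the doubling construction (length 2·n_{r-1}) has minimum distance exactly 4. -/

import Mathlib

/-- The doubling construction: `H_r = [[0…0 | 1…1], [H | H]]`. -/
def doubling {r n : ℕ} (H : Matrix (Fin r) (Fin n) (ZMod 2)) :
    Matrix (Unit ⊕ Fin r) (Fin n ⊕ Fin n) (ZMod 2) :=
  Matrix.of fun i j =>
    match i, j with
    | Sum.inl _, Sum.inl _ => 0
    | Sum.inl _, Sum.inr _ => 1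
    | Sum.inr i, Sum.inl j => H i j
    | Sum.inr i, Sum.inr j => H i j

lemma norm_sum_split {n : ℕ} (y : Fin n ⊕ Fin n → ZMod 2) :
    hammingNorm y = hammingNorm (fun j => y (Sum.inl j)) + hammingNorm (fun j => y (Sum.inr j)) := by
  simp only [hammingNorm, Finset.card_filter]
  rw [Fintype.sum_sum_type]

lemma hnorm_add_le {n : ℕ} (a b : Fin n → ZMod 2) :
    hammingNorm (a + b) ≤ hammingNorm a + hammingNorm b := by
  have := hammingDist_triangle (a + b) b 0
  rw [hammingDist_zero_right, hammingDist_zero_right, hammingDist_comm (a + b) b,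
    hammingDist_eq_hammingNorm, add_comm a b, neg_add_cancel_left] at this
  rwa [add_comm b a] at this

lemma sum_eq_norm {n : ℕ} (b : Fin n → ZMod 2) :
    ∑ j, b j = (hammingNorm b : ZMod 2) := by
  have h : ∀ x : ZMod 2, x = if x ≠ 0 then 1 else 0 := by decide
  calc ∑ j, b j = ∑ j, if b j ≠ 0 then (1 : ZMod 2) else 0 :=
        Finset.sum_congr rfl fun j _ => h (b j)
    _ = ((Finset.univ.filter fun j => b j ≠ 0).card : ZMod 2) := by
        rw [Finset.sum_boole]
    _ = (hammingNorm b : ZMod 2) := rfl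

/-- If the code with parity check matrix `H` has minimum distance ≥ 4 (and length ≥ 2),
then the doubled code has minimum distance exactly 4. -/
theorem stmt_0 {r n : ℕ} (hn : 2 ≤ n) (H : Matrix (Fin r) (Fin n) (ZMod 2))
    (hd : ∀ x : Fin n → ZMod 2, Matrix.mulVec H x = 0 → x ≠ 0 → 4 ≤ hammingNorm x) :
    (∀ y : Fin n ⊕ Fin n → ZMod 2,
        Matrix.mulVec (doubling H) y = 0 → y ≠ 0 → 4 ≤ hammingNorm y) ∧
    (∃ y : Fin n ⊕ Fin n → ZMod 2,
        Matrix.mulVec (doubling H) y = 0 ∧ y ≠ 0 ∧ hammingNorm y = 4) := by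
  constructor
  · intro y hy hy0
    have row0 : ∑ j, y (Sum.inr j) = 0 := by
      have := congrFun hy (Sum.inl ())
      simpa [Matrix.mulVec, dotProduct, doubling, Fintype.sum_sum_type] using this
    have rows : Matrix.mulVec H
        ((fun j => y (Sum.inl j)) + fun j => y (Sum.inr j)) = 0 := by
      funext i
      have := congrFun hy (Sum.inr i)
      simp [Matrix.mulVec, dotProduct, doubling, Fintype.sum_sum_type] at this
      simpa [Matrix.mulVec, dotProduct, Pi.add_apply, mul_add,
        Finset.sum_add_distrib] using this
    rw [norm_sum_split]
    by_cases hab : ((fun j => y (Sum.inl j)) + fun j => y (Sum.inr j)) = 0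
    · have hba : ∀ j, y (Sum.inl j) = y (Sum.inr j) := by
        intro j
        have h1 : y (Sum.inl j) + y (Sum.inr j) = 0 := congrFun hab j
        have h2 : ∀ u v : ZMod 2, u + v = 0 → u = v := by decide
        exact h2 _ _ h1
      have hbne : (fun j => y (Sum.inr j)) ≠ 0 := by
        intro h0
        apply hy0
        funext j
        cases j with
        | inl j => rw [hba j]; exact congrFun h0 j
        | inr j => exact congrFun h0 j
      have hcard : 2 ≤ hammingNorm (fun j => y (Sum.inr j)) := by
        rcases Nat.lt_or_ge (hammingNorm (fun j => y (Sum.inr j))) 2 with h | h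
        · interval_cases hh : hammingNorm (fun j => y (Sum.inr j))
          · exact absurd (hammingNorm_eq_zero.mp hh) hbne
          · exfalso
            rw [sum_eq_norm, hh] at row0
            simp at row0
        · exact h
      have heq : hammingNorm (fun j => y (Sum.inl j)) =
          hammingNorm (fun j => y (Sum.inr j)) := by
        congr 1; funext j; exact hba j
      omega
    · have h4 := hd _ rows hab
      have := hnorm_add_le (fun j => y (Sum.inl j)) (fun j => y (Sum.inr j))
      omega
  · obtain ⟨i0, i1, hne⟩ : ∃ i0 i1 : Fin n, i0 ≠ i1 :=
      ⟨⟨0, by omega⟩, ⟨1, by omega⟩, by simp [Fin.ext_iff]⟩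
    set c : Fin n → ZMod 2 := fun j => if j = i0 ∨ j = i1 then 1 else 0 with hc
    have hcval0 : c i0 = 1 := by simp [hc]
    have hcval1 : c i1 = 1 := by simp [hc]
    have hcval : ∀ j, j ≠ i0 → j ≠ i1 → c j = 0 := by
      intro j h0 h1; simp [hc, h0, h1]
    have hsum : ∀ (f : Fin n → ZMod 2), ∑ j, f j * c j = f i0 + f i1 := by
      intro f
      have key : ∀ j, f j * c j =
          (if j = i0 then f i0 else 0) + (if j = i1 then f i1 else 0) := by
        intro j
        by_cases h0 : j = i0
        · subst h0; simp [hcval0, hne]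
        · by_cases h1 : j = i1
          · subst h1; simp [hcval1, h0]
          · simp [hcval j h0 h1, h0, h1]
      simp_rw [key, Finset.sum_add_distrib, Finset.sum_ite_eq', Finset.mem_univ, if_pos]
    refine ⟨Sum.elim c c, ?_, ?_, ?_⟩
    · funext i
      cases i with
      | inl u =>
        have hsc : ∑ j, c j = 0 := by
          have h1 := hsum (fun _ => 1)
          simp only [one_mul, hcval0, hcval1] at h1
          rw [h1]; decide
        simp [Matrix.mulVec, dotProduct, doubling, Fintype.sum_sum_type, hsc]
      | inr i =>
        simp [Matrix.mulVec, dotProduct, doubling, Fintype.sum_sum_type, hsum,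
          CharTwo.add_self_eq_zero]
    · intro h
      have := congrFun h (Sum.inl i0)
      simp [hc] at this
    · rw [norm_sum_split]
      have : hammingNorm c = 2 := by
        have : (Finset.univ.filter fun j => c j ≠ 0) = {i0, i1} := by
          ext j
          by_cases h0 : j = i0 <;> by_cases h1 : j = i1 <;> simp_all [hc]
        rw [hammingNorm, this, Finset.card_insert_of_notMem (by simp [hne]),
          Finset.card_singleton]
      simp [this]
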